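/- If B and C are finite structures in K_α with A = B ∩ C and A ≤ B, then the free join B ⊕_A C is in K_α and C ≤ B ⊕_A C. -/

import Mathlib

open Finset

/-- The number of subsets of `A` on which the relation `E` holds. -/
noncomputable def edgeCount {L V : Type} (rel : L → Finset V → Prop) (E : L)
    (A : Finset V) : ℕ :=
  {e : Finset V | e ⊆ A ∧ rel E e}.ncard

/-- The rank function `δ(A) = |A| - ∑_E α_E · N_E(A)`. -/
noncomputable def delta {L V : Type} [Fintype L] (α : L → ℝ)
    (rel : L → Finset V → Prop) (A : Finset V) : ℝ :=
  (A.card : ℝ) - ∑ E, α E * (edgeCount rel E A : ℝ)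

/-- `A` is strong in `B`: `A ⊆ B` and `δ(A) ≤ δ(A')` for all `A ⊆ A' ⊆ B`. -/
def strong {L V : Type} [Fintype L] (α : L → ℝ) (rel : L → Finset V → Prop)
    (A B : Finset V) : Prop :=
  A ⊆ B ∧ ∀ A' : Finset V, A ⊆ A' → A' ⊆ B → delta α rel A ≤ delta α rel A'

/-- Membership in `K_α`: all substructures have nonnegative rank. -/
def inK {L V : Type} [Fintype L] (α : L → ℝ) (rel : L → Finset V → Prop)
    (A : Finset V) : Prop :=
  ∀ A' ⊆ A, 0 ≤ delta α rel A'

/-- `(A, B)` is a minimal pair: `A ≤ C` for all `A ⊆ C ⊊ B` but `A ≰ B`. -/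
def minPair {L V : Type} [Fintype L] (α : L → ℝ) (rel : L → Finset V → Prop)
    (A B : Finset V) : Prop :=
  A ⊆ B ∧ (∀ C : Finset V, A ⊆ C → C ⊂ B → strong α rel A C) ∧ ¬ strong α rel A B

namespace Stmt8Aux
set_option linter.unusedSectionVars false

variable {L V : Type} [Fintype L] [DecidableEq V] (α : L → ℝ) (rel : L → Finset V → Prop)

def eset (E : L) (A : Finset V) : Set (Finset V) := {e | e ⊆ A ∧ rel E e}

lemma eset_finite (E : L) (A : Finset V) : (eset rel E A).Finite :=
  (A.powerset.finite_toSet).subset (fun e he => by simpa using he.1)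

lemma edgeCount_def (E : L) (A : Finset V) : edgeCount rel E A = (eset rel E A).ncard := rfl

lemma edgeCount_submod (E : L) (X Y : Finset V) :
    edgeCount rel E X + edgeCount rel E Y ≤
      edgeCount rel E (X ∪ Y) + edgeCount rel E (X ∩ Y) := by
  have h1 : eset rel E X ∪ eset rel E Y ⊆ eset rel E (X ∪ Y) := by
    rintro e (⟨h, hr⟩ | ⟨h, hr⟩)
    · exact ⟨h.trans Finset.subset_union_left, hr⟩
    · exact ⟨h.trans Finset.subset_union_right, hr⟩
  have h2 : eset rel E X ∩ eset rel E Y = eset rel E (X ∩ Y) := by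
    ext e; simp only [eset, Set.mem_inter_iff, Set.mem_setOf_eq, Finset.subset_inter_iff]; tauto
  calc edgeCount rel E X + edgeCount rel E Y
      = (eset rel E X ∪ eset rel E Y).ncard + (eset rel E X ∩ eset rel E Y).ncard :=
        (Set.ncard_union_add_ncard_inter _ _ (eset_finite rel E X) (eset_finite rel E Y)).symm
    _ ≤ edgeCount rel E (X ∪ Y) + edgeCount rel E (X ∩ Y) := by
        rw [h2]
        exact add_le_add_left (Set.ncard_le_ncard h1 (eset_finite rel E _)) _

lemma delta_submod (hα : ∀ E, 0 ≤ α E) (X Y : Finset V) :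
    delta α rel (X ∪ Y) + delta α rel (X ∩ Y) ≤ delta α rel X + delta α rel Y := by
  have hc : ((X ∪ Y).card : ℝ) + ((X ∩ Y).card : ℝ) = (X.card : ℝ) + (Y.card : ℝ) := by
    exact_mod_cast Finset.card_union_add_card_inter X Y
  have hs : ∑ E, α E * (edgeCount rel E X : ℝ) + ∑ E, α E * (edgeCount rel E Y : ℝ)
      ≤ ∑ E, α E * (edgeCount rel E (X ∪ Y) : ℝ) + ∑ E, α E * (edgeCount rel E (X ∩ Y) : ℝ) := by
    rw [← Finset.sum_add_distrib, ← Finset.sum_add_distrib]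
    refine Finset.sum_le_sum fun E _ => ?_
    rw [← mul_add, ← mul_add]
    refine mul_le_mul_of_nonneg_left ?_ (hα E)
    exact_mod_cast edgeCount_submod rel E X Y
  simp only [delta]; linarith

lemma delta_free (B C : Finset V)
    (hfree : ∀ E (e : Finset V), rel E e → e ⊆ B ∪ C → (e ⊆ B ∨ e ⊆ C))
    (D : Finset V) (hD : D ⊆ B ∪ C) :
    delta α rel D + delta α rel (D ∩ (B ∩ C)) =
      delta α rel (D ∩ B) + delta α rel (D ∩ C) := by
  have hBC : (D ∩ B) ∪ (D ∩ C) = D := by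
    rw [← Finset.inter_union_distrib_left]
    exact Finset.inter_eq_left.mpr hD
  have hI : (D ∩ B) ∩ (D ∩ C) = D ∩ (B ∩ C) := by
    ext x; simp only [Finset.mem_inter]; tauto
  have hc : (D.card : ℝ) + ((D ∩ (B ∩ C)).card : ℝ)
      = ((D ∩ B).card : ℝ) + ((D ∩ C).card : ℝ) := by
    have := Finset.card_union_add_card_inter (D ∩ B) (D ∩ C)
    rw [hBC, hI] at this
    exact_mod_cast this
  have he : ∀ E, edgeCount rel E D + edgeCount rel E (D ∩ (B ∩ C))
      = edgeCount rel E (D ∩ B) + edgeCount rel E (D ∩ C) := by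
    intro E
    have h1 : eset rel E (D ∩ B) ∪ eset rel E (D ∩ C) = eset rel E D := by
      ext e
      simp only [eset, Set.mem_union, Set.mem_setOf_eq, Finset.subset_inter_iff]
      constructor
      · rintro (⟨⟨h1, h2⟩, hr⟩ | ⟨⟨h1, h2⟩, hr⟩) <;> exact ⟨h1, hr⟩
      · rintro ⟨h1, hr⟩
        rcases hfree E e hr (h1.trans hD) with h | h
        · exact Or.inl ⟨⟨h1, h⟩, hr⟩
        · exact Or.inr ⟨⟨h1, h⟩, hr⟩
    have h2 : eset rel E (D ∩ B) ∩ eset rel E (D ∩ C) = eset rel E (D ∩ (B ∩ C)) := by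
      ext e
      simp only [eset, Set.mem_inter_iff, Set.mem_setOf_eq, Finset.subset_inter_iff]
      tauto
    have := Set.ncard_union_add_ncard_inter _ _ (eset_finite rel E (D ∩ B))
      (eset_finite rel E (D ∩ C))
    rw [h1, h2] at this
    simp only [edgeCount_def]
    omega
  have hs : ∑ E, α E * (edgeCount rel E D : ℝ) + ∑ E, α E * (edgeCount rel E (D ∩ (B ∩ C)) : ℝ)
      = ∑ E, α E * (edgeCount rel E (D ∩ B) : ℝ) + ∑ E, α E * (edgeCount rel E (D ∩ C) : ℝ) := by
    rw [← Finset.sum_add_distrib, ← Finset.sum_add_distrib]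
    refine Finset.sum_congr rfl fun E _ => ?_
    rw [← mul_add, ← mul_add]
    congr 1
    exact_mod_cast he E
  simp only [delta]; linarith

end Stmt8Aux


/-- If `B, C ∈ K_α`, `A = B ∩ C` and `A ≤ B`, then the free join `B ⊕_A C`
lies in `K_α` and `C ≤ B ⊕_A C`. -/
theorem stmt8 {L V : Type} [Fintype L] [DecidableEq V] (α : L → ℝ)
    (hα : ∀ E, 0 < α E ∧ α E ≤ 1) (ar : L → ℕ) (har : ∀ E, 2 ≤ ar E)
    (rel : L → Finset V → Prop) (hedge : ∀ E e, rel E e → e.card = ar E)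
    (A B C : Finset V) (hA : A = B ∩ C)
    (hB : inK α rel B) (hC : inK α rel C)
    (hAB : strong α rel A B)
    (hfree : ∀ E (e : Finset V), rel E e → e ⊆ B ∪ C → (e ⊆ B ∨ e ⊆ C)) :
    inK α rel (B ∪ C) ∧ strong α rel C (B ∪ C) := by

  have hαpos : ∀ E, 0 ≤ α E := fun E => (hα E).1.le
  -- key: for X ⊆ B, δ(X ∩ A) ≤ δ(X)
  have key : ∀ X : Finset V, X ⊆ B → delta α rel (X ∩ A) ≤ delta α rel X := by
    intro X hX
    have hsub := Stmt8Aux.delta_submod α rel hαpos A X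
    have h1 : delta α rel A ≤ delta α rel (A ∪ X) :=
      hAB.2 (A ∪ X) Finset.subset_union_left (Finset.union_subset hAB.1 hX)
    rw [Finset.inter_comm X A]
    linarith
  have free : ∀ D : Finset V, D ⊆ B ∪ C →
      delta α rel D + delta α rel (D ∩ (B ∩ C)) =
        delta α rel (D ∩ B) + delta α rel (D ∩ C) :=
    Stmt8Aux.delta_free α rel B C hfree
  constructor
  · intro D hD
    have hfr := free D hD
    have h1 : delta α rel ((D ∩ B) ∩ A) ≤ delta α rel (D ∩ B) :=
      key (D ∩ B) Finset.inter_subset_right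
    have hEq : (D ∩ B) ∩ A = D ∩ (B ∩ C) := by
      rw [hA]; ext x; simp only [Finset.mem_inter]; tauto
    rw [hEq] at h1
    have h2 : 0 ≤ delta α rel (D ∩ C) := hC (D ∩ C) Finset.inter_subset_right
    linarith
  · refine ⟨Finset.subset_union_right, fun D hCD hD => ?_⟩
    have hfr := free D hD
    have hDC : D ∩ C = C := Finset.inter_eq_right.mpr hCD
    have hAC : A ⊆ C := by rw [hA]; exact Finset.inter_subset_right
    have hDA : D ∩ (B ∩ C) = A := by
      rw [← hA]; exact Finset.inter_eq_right.mpr (hAC.trans hCD)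
    have h1 : delta α rel A ≤ delta α rel (D ∩ B) :=
      hAB.2 (D ∩ B) (Finset.subset_inter (hAC.trans hCD) hAB.1) Finset.inter_subset_right
    rw [hDC, hDA] at hfr
    linarith
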